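/- arXiv:2006.08567 — 5 statements merged into one kernel-verified Lean document; each statement's English description precedes it below -/
import Mathlib

section
/- More generally, for all a,b ∈ ℝ and σ,τ > 0, the squared Hellinger distance between normal distributions satisfies H²(N(a,σ²), N(b,τ²)) = 1 - √(2στ/(σ²+τ²)) · exp(-(a-b)²/(4(σ²+τ²))). -/
open MeasureTheory ProbabilityTheory

/-- For all `a, b ∈ ℝ` and `σ, τ > 0`, the squared Hellinger distance
between normal distributions satisfies
`H²(N(a,σ²), N(b,τ²)) = 1 - √(2στ/(σ²+τ²)) · exp(-(a-b)²/(4(σ²+τ²)))`. -/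
theorem sqHellinger_gaussianReal (a b σ τ : ℝ) (hσ : 0 < σ) (hτ : 0 < τ) :
    1 - ∫ t, Real.sqrt
        (((gaussianReal a ⟨σ ^ 2, sq_nonneg σ⟩).rnDeriv
            (gaussianReal b ⟨τ ^ 2, sq_nonneg τ⟩) t).toReal)
        ∂(gaussianReal b ⟨τ ^ 2, sq_nonneg τ⟩) =
      1 - Real.sqrt (2 * σ * τ / (σ ^ 2 + τ ^ 2)) *
          Real.exp (-(a - b) ^ 2 / (4 * (σ ^ 2 + τ ^ 2))) := by
  congr 1
  set v1 : NNReal := ⟨σ ^ 2, sq_nonneg σ⟩ with hv1def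
  set v2 : NNReal := ⟨τ ^ 2, sq_nonneg τ⟩ with hv2def
  have hv1 : v1 ≠ 0 := by
    intro h; apply absurd (congrArg (NNReal.toReal) h); simp [hv1def]; exact (pow_pos hσ 2).ne'
  have hv2 : v2 ≠ 0 := by
    intro h; apply absurd (congrArg (NNReal.toReal) h); simp [hv2def]; exact (pow_pos hτ 2).ne'
  set p : ℝ → ℝ := gaussianPDFReal a v1 with hp
  set q : ℝ → ℝ := gaussianPDFReal b v2 with hq
  have hppos : ∀ t, 0 < p t := fun t => gaussianPDFReal_pos _ _ _ hv1
  have hqpos : ∀ t, 0 < q t := fun t => gaussianPDFReal_pos _ _ _ hv2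
  set g : ℝ → ENNReal := fun t => ENNReal.ofReal (p t / q t) with hg
  have hgmeas : Measurable g := by
    exact ((measurable_gaussianPDFReal a v1).div (measurable_gaussianPDFReal b v2)).ennreal_ofReal
  have hwd : (gaussianReal b v2).withDensity g = gaussianReal a v1 := by
    rw [gaussianReal_of_var_ne_zero _ hv2, gaussianReal_of_var_ne_zero _ hv1,
      ← withDensity_mul _ (measurable_gaussianPDF b v2) hgmeas]
    congr 1
    ext t
    simp only [gaussianPDF, Pi.mul_apply, hg]
    rw [← ENNReal.ofReal_mul (gaussianPDFReal_nonneg _ _ _)]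
    rw [mul_comm, div_mul_cancel₀ _ (hqpos t).ne']
  have hrn : (gaussianReal a v1).rnDeriv (gaussianReal b v2) =ᵐ[gaussianReal b v2] g := by
    conv_lhs => rw [← hwd]
    exact Measure.rnDeriv_withDensity _ hgmeas
  rw [integral_congr_ae (hrn.mono fun t ht => by rw [ht])]
  have hsimp : ∀ t, Real.sqrt ((g t).toReal) = Real.sqrt (p t / q t) := fun t => by
    rw [hg, ENNReal.toReal_ofReal (div_nonneg (hppos t).le (hqpos t).le)]
  simp_rw [hsimp]
  rw [gaussianReal_of_var_ne_zero _ hv2]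
  have hcoe : gaussianPDF b v2 = fun t => ((q t).toNNReal : ENNReal) := by
    ext t; rw [gaussianPDF]; rfl
  rw [hcoe, integral_withDensity_eq_integral_smul
    ((measurable_gaussianPDFReal b v2).real_toNNReal) _]
  -- set up constants
  set k : ℝ := (σ ^ 2 + τ ^ 2) / (4 * σ ^ 2 * τ ^ 2) with hk
  set m : ℝ := (a * τ ^ 2 + b * σ ^ 2) / (σ ^ 2 + τ ^ 2) with hm
  set D : ℝ := -(a - b) ^ 2 / (4 * (σ ^ 2 + τ ^ 2)) with hD
  have hst : (0:ℝ) < σ ^ 2 + τ ^ 2 := by positivity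
  have hkpos : 0 < k := by rw [hk]; positivity
  have hpq : ∀ t, (q t).toNNReal • Real.sqrt (p t / q t)
      = ((2 * Real.pi * σ * τ)⁻¹).sqrt * Real.exp D * Real.exp (-k * (t - m) ^ 2) := by
    intro t
    have hq0 := (hqpos t).ne'
    have h1 : (q t).toNNReal • Real.sqrt (p t / q t) = Real.sqrt (p t * q t) := by
      rw [NNReal.smul_def]
      rw [Real.coe_toNNReal _ (hqpos t).le, smul_eq_mul]
      rw [show p t * q t = p t / q t * q t ^ 2 by field_simp,
        Real.sqrt_mul (div_nonneg (hppos t).le (hqpos t).le),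
        Real.sqrt_sq (hqpos t).le, mul_comm]
    rw [h1, hp, hq, gaussianPDFReal, gaussianPDFReal]
    have hv1c : ((v1 : ℝ)) = σ ^ 2 := rfl
    have hv2c : ((v2 : ℝ)) = τ ^ 2 := rfl
    rw [hv1c, hv2c]
    have h2 : (Real.sqrt (2 * Real.pi * σ ^ 2))⁻¹ * Real.exp (-(t - a) ^ 2 / (2 * σ ^ 2)) *
        ((Real.sqrt (2 * Real.pi * τ ^ 2))⁻¹ * Real.exp (-(t - b) ^ 2 / (2 * τ ^ 2)))
        = (2 * Real.pi * σ * τ)⁻¹ *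
          Real.exp (2 * (D + -k * (t - m) ^ 2)) := by
      have hs : Real.sqrt (2 * Real.pi * σ ^ 2) * Real.sqrt (2 * Real.pi * τ ^ 2)
          = 2 * Real.pi * σ * τ := by
        rw [← Real.sqrt_mul (by positivity),
          show (2 * Real.pi * σ ^ 2) * (2 * Real.pi * τ ^ 2) = (2 * Real.pi * σ * τ) ^ 2 by ring,
          Real.sqrt_sq (by positivity)]
      rw [show (Real.sqrt (2 * Real.pi * σ ^ 2))⁻¹ * Real.exp (-(t - a) ^ 2 / (2 * σ ^ 2)) *
        ((Real.sqrt (2 * Real.pi * τ ^ 2))⁻¹ * Real.exp (-(t - b) ^ 2 / (2 * τ ^ 2)))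
        = (Real.sqrt (2 * Real.pi * σ ^ 2) * Real.sqrt (2 * Real.pi * τ ^ 2))⁻¹ *
          (Real.exp (-(t - a) ^ 2 / (2 * σ ^ 2)) * Real.exp (-(t - b) ^ 2 / (2 * τ ^ 2))) by
            rw [mul_inv]; ring, hs, ← Real.exp_add]
      congr 1
      congr 1
      rw [hD, hk, hm]
      field_simp
      ring
    rw [h2, Real.sqrt_mul (by positivity), ← Real.exp_half,
      show 2 * (D + -k * (t - m) ^ 2) / 2 = D + -k * (t - m) ^ 2 by ring, Real.exp_add]
    ring
  simp_rw [← hq, hpq]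
  rw [MeasureTheory.integral_const_mul]
  have htrans : ∫ t : ℝ, Real.exp (-k * (t - m) ^ 2)
      = Real.sqrt (Real.pi / k) := by
    rw [show (fun t : ℝ => Real.exp (-k * (t - m) ^ 2))
        = fun t : ℝ => (fun u : ℝ => Real.exp (-k * u ^ 2)) (t - m) from rfl,
      integral_sub_right_eq_self (fun u : ℝ => Real.exp (-k * u ^ 2)) m]
    exact integral_gaussian k
  rw [htrans]
  rw [mul_comm (Real.sqrt _) (Real.exp D), mul_assoc, ← Real.sqrt_mul (by positivity)]
  rw [show (2 * Real.pi * σ * τ)⁻¹ * (Real.pi / k) = 2 * σ * τ / (σ ^ 2 + τ ^ 2) by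
    rw [hk]; field_simp; ring]
  rw [hD]; ring
end

section
/- If (aₙ) and (σₙ) are sequences of reals with ∑ σₙ² = +∞, then for each a ∈ ℝ and each n, the total variation distance ‖N(aₙ,σₙ²)*⋯*N(a_{n+m},σ_{n+m}²)*δ_a − N(aₙ,σₙ²)*⋯*N(a_{n+m},σ_{n+m}²)‖ tends to 0 as m → ∞; i.e. the sequence of Gaussian measures (N(aₙ,σₙ²)) is asymptotically translation invariant (ATI). -/
open MeasureTheory ProbabilityTheory Filter Real
open scoped NNReal ENNReal

lemma pdf_prod_eq (μ₁ μ₂ : ℝ) (v₁ v₂ : ℝ≥0) (hv₁ : v₁ ≠ 0) (hv₂ : v₂ ≠ 0) (y x : ℝ) :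
    gaussianPDFReal μ₁ v₁ x * gaussianPDFReal μ₂ v₂ (y - x) =
      gaussianPDFReal (μ₁ + μ₂) (v₁ + v₂) y *
        gaussianPDFReal ((μ₁ * v₂ + (y - μ₂) * v₁) / (v₁ + v₂)) (v₁ * v₂ / (v₁ + v₂)) x := by
  have h1 : (0:ℝ) < v₁ := lt_of_le_of_ne v₁.coe_nonneg (by exact_mod_cast (Ne.symm hv₁))
  have h2 : (0:ℝ) < v₂ := lt_of_le_of_ne v₂.coe_nonneg (by exact_mod_cast (Ne.symm hv₂))
  have h12 : (0:ℝ) < (v₁:ℝ) + v₂ := by linarith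
  have hπ : (0:ℝ) < π := Real.pi_pos
  have hcast : ((v₁ * v₂ / (v₁ + v₂) : ℝ≥0) : ℝ) = (v₁:ℝ) * v₂ / ((v₁:ℝ) + v₂) := by
    push_cast [NNReal.coe_div]
    ring
  have hcast2 : ((v₁ + v₂ : ℝ≥0) : ℝ) = (v₁:ℝ) + v₂ := by push_cast; ring
  simp only [gaussianPDFReal, hcast, hcast2]
  rw [show ((√(2 * π * v₁))⁻¹ * rexp (-(x - μ₁) ^ 2 / (2 * v₁))) *
      ((√(2 * π * v₂))⁻¹ * rexp (-(y - x - μ₂) ^ 2 / (2 * v₂))) =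
      ((√(2 * π * v₁))⁻¹ * (√(2 * π * v₂))⁻¹) *
      (rexp (-(x - μ₁) ^ 2 / (2 * v₁)) * rexp (-(y - x - μ₂) ^ 2 / (2 * v₂))) by ring,
    ← Real.exp_add]
  rw [show ((√(2 * π * ((v₁:ℝ) + v₂)))⁻¹ * rexp (-(y - (μ₁ + μ₂)) ^ 2 / (2 * ((v₁:ℝ) + v₂)))) *
      ((√(2 * π * ((v₁:ℝ) * v₂ / ((v₁:ℝ) + v₂))))⁻¹ *
        rexp (-(x - (μ₁ * v₂ + (y - μ₂) * v₁) / ((v₁:ℝ) + v₂)) ^ 2 / (2 * ((v₁:ℝ) * v₂ / ((v₁:ℝ) + v₂))))) =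
      ((√(2 * π * ((v₁:ℝ) + v₂)))⁻¹ * (√(2 * π * ((v₁:ℝ) * v₂ / ((v₁:ℝ) + v₂))))⁻¹) *
      (rexp (-(y - (μ₁ + μ₂)) ^ 2 / (2 * ((v₁:ℝ) + v₂))) *
        rexp (-(x - (μ₁ * v₂ + (y - μ₂) * v₁) / ((v₁:ℝ) + v₂)) ^ 2 / (2 * ((v₁:ℝ) * v₂ / ((v₁:ℝ) + v₂))))) by ring,
    ← Real.exp_add]
  congr 1
  · rw [← mul_inv, ← mul_inv, ← Real.sqrt_mul (by positivity), ← Real.sqrt_mul (by positivity)]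
    congr 1
    field_simp
  · congr 1
    field_simp
    ring

lemma lintegral_pdf_conv (μ₁ μ₂ : ℝ) (v₁ v₂ : ℝ≥0) (hv₁ : v₁ ≠ 0) (hv₂ : v₂ ≠ 0) (y : ℝ) :
    ∫⁻ x, gaussianPDF μ₁ v₁ x * gaussianPDF μ₂ v₂ (y - x) =
      gaussianPDF (μ₁ + μ₂) (v₁ + v₂) y := by
  have hw : (v₁ * v₂ / (v₁ + v₂) : ℝ≥0) ≠ 0 := by
    have : v₁ + v₂ ≠ 0 := by simp [hv₁]
    positivity
  have : ∀ x, gaussianPDF μ₁ v₁ x * gaussianPDF μ₂ v₂ (y - x) =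
      gaussianPDF (μ₁ + μ₂) (v₁ + v₂) y *
        gaussianPDF ((μ₁ * v₂ + (y - μ₂) * v₁) / (v₁ + v₂)) (v₁ * v₂ / (v₁ + v₂)) x := by
    intro x
    simp only [gaussianPDF]
    rw [← ENNReal.ofReal_mul (gaussianPDFReal_nonneg _ _ _),
      ← ENNReal.ofReal_mul (gaussianPDFReal_nonneg _ _ _),
      pdf_prod_eq μ₁ μ₂ v₁ v₂ hv₁ hv₂ y x]
  simp only [this]
  rw [lintegral_const_mul _ (measurable_gaussianPDF _ _), lintegral_gaussianPDF_eq_one _ hw,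
    mul_one]

lemma conv_dirac' (μ : Measure ℝ) [SFinite μ] (x : ℝ) :
    Measure.conv μ (Measure.dirac x) = μ.map (· + x) := by
  unfold Measure.conv
  rw [MeasureTheory.Measure.prod_dirac, Measure.map_map (by fun_prop) (by fun_prop)]
  rfl

lemma dirac_conv' (ν : Measure ℝ) [SFinite ν] (x : ℝ) :
    Measure.conv (Measure.dirac x) ν = ν.map (x + ·) := by
  unfold Measure.conv
  rw [MeasureTheory.Measure.dirac_prod, Measure.map_map (by fun_prop) (by fun_prop)]
  rfl

lemma gaussianReal_conv_gaussianReal (μ₁ μ₂ : ℝ) (v₁ v₂ : ℝ≥0) :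
    Measure.conv (gaussianReal μ₁ v₁) (gaussianReal μ₂ v₂) =
      gaussianReal (μ₁ + μ₂) (v₁ + v₂) := by
  by_cases hv₁ : v₁ = 0
  · subst hv₁
    rw [gaussianReal_zero_var, dirac_conv', gaussianReal_map_const_add, zero_add, add_comm μ₂ μ₁]
  by_cases hv₂ : v₂ = 0
  · subst hv₂
    rw [gaussianReal_zero_var, conv_dirac', gaussianReal_map_add_const, add_zero]
  ext s hs
  have hadd : Measurable fun p : ℝ × ℝ => p.1 + p.2 := by fun_prop
  rw [Measure.conv, Measure.map_apply hadd hs, Measure.prod_apply (hadd hs)]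
  have h1 : ∀ x : ℝ, (gaussianReal μ₂ v₂) (Prod.mk x ⁻¹' ((fun p : ℝ × ℝ => p.1 + p.2) ⁻¹' s)) =
      ∫⁻ y in s, gaussianPDF μ₂ v₂ (y - x) := by
    intro x
    have : Prod.mk x ⁻¹' ((fun p : ℝ × ℝ => p.1 + p.2) ⁻¹' s) = (fun y => x + y) ⁻¹' s := rfl
    rw [this, ← Measure.map_apply (by fun_prop) hs, gaussianReal_map_const_add,
      gaussianReal_apply _ (by simpa using hv₂)]
    congr 1
    ext y
    rw [gaussianPDF, gaussianPDF, gaussianPDFReal_sub]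
  simp only [h1]
  rw [gaussianReal_of_var_ne_zero _ hv₁,
    lintegral_withDensity_eq_lintegral_mul _ (measurable_gaussianPDF _ _)
      (Measurable.lintegral_prod_right (f := fun x y => gaussianPDF μ₂ v₂ (y - x))
        ((measurable_gaussianPDF _ _).comp (measurable_snd.sub measurable_fst)))]
  have h2 : ∀ x : ℝ, gaussianPDF μ₁ v₁ x * ∫⁻ y in s, gaussianPDF μ₂ v₂ (y - x) =
      ∫⁻ y in s, gaussianPDF μ₁ v₁ x * gaussianPDF μ₂ v₂ (y - x) := fun x =>
    (lintegral_const_mul _ ((measurable_gaussianPDF _ _).comp (by fun_prop))).symm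
  simp only [Pi.mul_apply, h2]
  rw [lintegral_lintegral_swap (((measurable_gaussianPDF μ₁ v₁).comp measurable_fst).mul
    ((measurable_gaussianPDF μ₂ v₂).comp (measurable_snd.sub measurable_fst))).aemeasurable]
  have h3 : ∀ y : ℝ, ∫⁻ x, gaussianPDF μ₁ v₁ x * gaussianPDF μ₂ v₂ (y - x) =
      gaussianPDF (μ₁ + μ₂) (v₁ + v₂) y := fun y => lintegral_pdf_conv μ₁ μ₂ v₁ v₂ hv₁ hv₂ y
  simp only [h3]
  rw [← gaussianReal_apply _ (by simp [hv₁]) s]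


lemma pdf_le_max (μ : ℝ) (v : ℝ≥0) (x : ℝ) :
    gaussianPDFReal μ v x ≤ (Real.sqrt (2 * π * v))⁻¹ := by
  rw [gaussianPDFReal]
  nth_rewrite 2 [show (Real.sqrt (2 * π * v))⁻¹ = (Real.sqrt (2 * π * v))⁻¹ * 1 by ring]
  refine mul_le_mul_of_nonneg_left ?_ (by positivity)
  rw [Real.exp_le_one_iff]
  have h2v : (0:ℝ) ≤ 2 * v := by positivity
  exact div_nonpos_of_nonpos_of_nonneg (by nlinarith [sq_nonneg (x - μ)]) h2v

lemma pdf_shift_left (μ : ℝ) {v : ℝ≥0} (hv : v ≠ 0) {c x : ℝ} (hc : 0 ≤ c)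
    (hx : x ≤ μ + c / 2) : gaussianPDFReal (μ + c) v x ≤ gaussianPDFReal μ v x := by
  have hvpos : (0:ℝ) < v := lt_of_le_of_ne v.coe_nonneg (by exact_mod_cast Ne.symm hv)
  rw [gaussianPDFReal, gaussianPDFReal]
  refine mul_le_mul_of_nonneg_left ?_ (by positivity)
  rw [Real.exp_le_exp]
  rw [div_le_div_iff_of_pos_right (by positivity : (0:ℝ) < 2 * v)]
  nlinarith

lemma pdf_shift_right (μ : ℝ) {v : ℝ≥0} (hv : v ≠ 0) {c x : ℝ} (hc : 0 ≤ c)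
    (hx : μ + c / 2 ≤ x) : gaussianPDFReal μ v x ≤ gaussianPDFReal (μ + c) v x := by
  have hvpos : (0:ℝ) < v := lt_of_le_of_ne v.coe_nonneg (by exact_mod_cast Ne.symm hv)
  rw [gaussianPDFReal, gaussianPDFReal]
  refine mul_le_mul_of_nonneg_left ?_ (by positivity)
  rw [Real.exp_le_exp]
  rw [div_le_div_iff_of_pos_right (by positivity : (0:ℝ) < 2 * v)]
  nlinarith

lemma gaussian_dens_cmp {μ : ℝ} {v : ℝ≥0} (hv : v ≠ 0) {c : ℝ} (hc : 0 ≤ c) {u : Set ℝ}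
    (_hu : MeasurableSet u) (hsub : u ⊆ Set.Iic (μ + c / 2)) :
    gaussianReal (μ + c) v u ≤ gaussianReal μ v u := by
  rw [gaussianReal_apply _ hv, gaussianReal_apply _ hv]
  refine setLIntegral_mono (measurable_gaussianPDF _ _) fun x hx => ?_
  exact ENNReal.ofReal_le_ofReal (pdf_shift_left μ hv hc (hsub hx))

lemma gaussian_dens_cmp' {μ : ℝ} {v : ℝ≥0} (hv : v ≠ 0) {c : ℝ} (hc : 0 ≤ c) {u : Set ℝ}
    (_hu : MeasurableSet u) (hsub : u ⊆ Set.Ici (μ + c / 2)) :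
    gaussianReal μ v u ≤ gaussianReal (μ + c) v u := by
  rw [gaussianReal_apply _ hv, gaussianReal_apply _ hv]
  refine setLIntegral_mono (measurable_gaussianPDF _ _) fun x hx => ?_
  exact ENNReal.ofReal_le_ofReal (pdf_shift_right μ hv hc (hsub hx))

lemma gaussian_Ico_bound (μ : ℝ) {v : ℝ≥0} (hv : v ≠ 0) (b e : ℝ) :
    gaussianReal μ v (Set.Ico b e) ≤ ENNReal.ofReal ((e - b) * (Real.sqrt (2 * π * v))⁻¹) := by
  rcases le_or_gt e b with h | h
  · rw [Set.Ico_eq_empty (by exact fun h' => absurd h' (not_lt.mpr h))]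
    simp
  rw [gaussianReal_apply _ hv]
  calc ∫⁻ x in Set.Ico b e, gaussianPDF μ v x
      ≤ ∫⁻ _ in Set.Ico b e, ENNReal.ofReal ((Real.sqrt (2 * π * v))⁻¹) :=
        setLIntegral_mono measurable_const fun x _ => ENNReal.ofReal_le_ofReal (pdf_le_max μ v x)
    _ = ENNReal.ofReal ((Real.sqrt (2 * π * v))⁻¹) * volume (Set.Ico b e) := by
        rw [setLIntegral_const]
    _ = ENNReal.ofReal ((e - b) * (Real.sqrt (2 * π * v))⁻¹) := by
        rw [Real.volume_Ico, ← ENNReal.ofReal_mul (by positivity), mul_comm]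

lemma gaussian_shift_le (μ : ℝ) {v : ℝ≥0} (hv : v ≠ 0) {c : ℝ} (hc : 0 ≤ c)
    {s : Set ℝ} (hs : MeasurableSet s) :
    gaussianReal (μ + c) v s ≤
      gaussianReal μ v s + ENNReal.ofReal (c * (Real.sqrt (2 * π * v))⁻¹) := by
  set t := μ + c / 2 with ht
  set P := gaussianReal (μ + c) v with hP
  set Q := gaussianReal μ v with hQ
  have hPQ : ∀ u : Set ℝ, MeasurableSet u → P u = Q ((· + c) ⁻¹' u) := fun u hu => by
    rw [hP, hQ, ← gaussianReal_map_add_const c, Measure.map_apply (by fun_prop) hu]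
  have hdisj : Disjoint (Set.Ico (t - c) t) (Set.Ici t) :=
    Set.disjoint_left.mpr fun x hx hx' => hx.2.not_ge hx'
  have hIci : P (Set.Ici t) = Q (Set.Ico (t - c) t) + Q (Set.Ici t) := by
    rw [hPQ _ measurableSet_Ici]
    have hpre : (· + c) ⁻¹' Set.Ici t = Set.Ici (t - c) := by
      ext x; simp [Set.mem_Ici, sub_le_iff_le_add]
    rw [hpre, ← Set.Ico_union_Ici_eq_Ici (by linarith : t - c ≤ t),
      measure_union hdisj measurableSet_Ici]
  have hsplit : ∀ ν : Measure ℝ, ν s = ν (s ∩ Set.Iio t) + ν (s ∩ Set.Ici t) := fun ν => by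
    rw [← measure_union (Set.disjoint_left.mpr fun x hx hx' => hx.2.not_ge (Set.mem_Ici.mp hx'.2))
      (hs.inter measurableSet_Ici), ← Set.inter_union_distrib_left, Set.Iio_union_Ici,
      Set.inter_univ]
  have h1 : P (s ∩ Set.Iio t) ≤ Q (s ∩ Set.Iio t) :=
    gaussian_dens_cmp hv hc (hs.inter measurableSet_Iio)
      (fun x hx => Set.mem_Iic.mpr hx.2.le)
  have hdiffcmp : Q (Set.Ici t \ s) ≤ P (Set.Ici t \ s) :=
    gaussian_dens_cmp' hv hc (measurableSet_Ici.diff hs) (fun x hx => hx.1)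
  have hQIci : Q (Set.Ici t) = Q (s ∩ Set.Ici t) + Q (Set.Ici t \ s) := by
    rw [← measure_union (Set.disjoint_left.mpr fun x hx hx' => hx'.2 hx.1)
      ((measurableSet_Ici.diff hs)), Set.inter_comm, Set.inter_union_diff]
  have hPIci : P (Set.Ici t) = P (s ∩ Set.Ici t) + P (Set.Ici t \ s) := by
    rw [← measure_union (Set.disjoint_left.mpr fun x hx hx' => hx'.2 hx.1)
      ((measurableSet_Ici.diff hs)), Set.inter_comm, Set.inter_union_diff]
  have h2 : P (s ∩ Set.Ici t) + Q (Set.Ici t) ≤ Q (s ∩ Set.Ici t) + P (Set.Ici t) := by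
    rw [hQIci, hPIci, ← add_assoc, ← add_assoc, add_comm (P (s ∩ Set.Ici t)) (Q (s ∩ Set.Ici t))]
    exact add_le_add_right hdiffcmp _
  have h3 : P (s ∩ Set.Ici t) ≤ Q (s ∩ Set.Ici t) + Q (Set.Ico (t - c) t) := by
    rw [hIci] at h2
    rw [← ENNReal.add_le_add_iff_right (measure_ne_top Q (Set.Ici t))]
    calc P (s ∩ Set.Ici t) + Q (Set.Ici t) ≤
        Q (s ∩ Set.Ici t) + (Q (Set.Ico (t - c) t) + Q (Set.Ici t)) := h2
      _ = Q (s ∩ Set.Ici t) + Q (Set.Ico (t - c) t) + Q (Set.Ici t) := by rw [add_assoc]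
  have hIco : Q (Set.Ico (t - c) t) ≤ ENNReal.ofReal (c * (Real.sqrt (2 * π * v))⁻¹) := by
    have := gaussian_Ico_bound μ hv (t - c) t
    simpa using this
  calc P s = P (s ∩ Set.Iio t) + P (s ∩ Set.Ici t) := hsplit P
    _ ≤ Q (s ∩ Set.Iio t) + (Q (s ∩ Set.Ici t) + Q (Set.Ico (t - c) t)) := add_le_add h1 h3
    _ = (Q (s ∩ Set.Iio t) + Q (s ∩ Set.Ici t)) + Q (Set.Ico (t - c) t) := by rw [add_assoc]
    _ = Q s + Q (Set.Ico (t - c) t) := by rw [← hsplit Q]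
    _ ≤ Q s + ENNReal.ofReal (c * (Real.sqrt (2 * π * v))⁻¹) := add_le_add_right hIco _

lemma gaussian_shift_ge (μ : ℝ) {v : ℝ≥0} (hv : v ≠ 0) {c : ℝ} (hc : 0 ≤ c)
    {s : Set ℝ} (hs : MeasurableSet s) :
    gaussianReal μ v s ≤
      gaussianReal (μ + c) v s + ENNReal.ofReal (c * (Real.sqrt (2 * π * v))⁻¹) := by
  set t := μ + c / 2 with ht
  set P := gaussianReal (μ + c) v with hP
  set Q := gaussianReal μ v with hQ
  have hPQ : ∀ u : Set ℝ, MeasurableSet u → P u = Q ((· + c) ⁻¹' u) := fun u hu => by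
    rw [hP, hQ, ← gaussianReal_map_add_const c, Measure.map_apply (by fun_prop) hu]
  have hIio : Q (Set.Iio t) = P (Set.Iio t) + Q (Set.Ico (t - c) t) := by
    have hpre : (· + c) ⁻¹' Set.Iio t = Set.Iio (t - c) := by
      ext x; simp [Set.mem_Iio, lt_sub_iff_add_lt]
    rw [hPQ _ measurableSet_Iio, hpre,
      ← Set.Iio_union_Ico_eq_Iio (by linarith : t - c ≤ t),
      measure_union (Set.disjoint_left.mpr fun x hx hx' => (hx.trans_le hx'.1).false)
        (measurableSet_Ico)]
  have hsplit : ∀ ν : Measure ℝ, ν s = ν (s ∩ Set.Iio t) + ν (s ∩ Set.Ici t) := fun ν => by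
    rw [← measure_union (Set.disjoint_left.mpr fun x hx hx' => hx.2.not_ge (Set.mem_Ici.mp hx'.2))
      (hs.inter measurableSet_Ici), ← Set.inter_union_distrib_left, Set.Iio_union_Ici,
      Set.inter_univ]
  have h1 : Q (s ∩ Set.Ici t) ≤ P (s ∩ Set.Ici t) :=
    gaussian_dens_cmp' hv hc (hs.inter measurableSet_Ici) (fun x hx => hx.2)
  have hdiffcmp : P (Set.Iio t \ s) ≤ Q (Set.Iio t \ s) :=
    gaussian_dens_cmp hv hc (measurableSet_Iio.diff hs) (fun x hx => Set.mem_Iic.mpr hx.1.le)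
  have hQIio : Q (Set.Iio t) = Q (s ∩ Set.Iio t) + Q (Set.Iio t \ s) := by
    rw [← measure_union (Set.disjoint_left.mpr fun x hx hx' => hx'.2 hx.1)
      ((measurableSet_Iio.diff hs)), Set.inter_comm, Set.inter_union_diff]
  have hPIio : P (Set.Iio t) = P (s ∩ Set.Iio t) + P (Set.Iio t \ s) := by
    rw [← measure_union (Set.disjoint_left.mpr fun x hx hx' => hx'.2 hx.1)
      ((measurableSet_Iio.diff hs)), Set.inter_comm, Set.inter_union_diff]
  have h2 : Q (s ∩ Set.Iio t) + P (Set.Iio t) ≤ P (s ∩ Set.Iio t) + Q (Set.Iio t) := by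
    rw [hQIio, hPIio, ← add_assoc, ← add_assoc, add_comm (Q (s ∩ Set.Iio t)) (P (s ∩ Set.Iio t))]
    exact add_le_add_right hdiffcmp _
  have h3 : Q (s ∩ Set.Iio t) ≤ P (s ∩ Set.Iio t) + Q (Set.Ico (t - c) t) := by
    rw [hIio] at h2
    rw [← ENNReal.add_le_add_iff_right (measure_ne_top P (Set.Iio t))]
    calc Q (s ∩ Set.Iio t) + P (Set.Iio t)
        ≤ P (s ∩ Set.Iio t) + (P (Set.Iio t) + Q (Set.Ico (t - c) t)) := h2
      _ = P (s ∩ Set.Iio t) + Q (Set.Ico (t - c) t) + P (Set.Iio t) := by ring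
  have hIco : Q (Set.Ico (t - c) t) ≤ ENNReal.ofReal (c * (Real.sqrt (2 * π * v))⁻¹) := by
    have := gaussian_Ico_bound μ hv (t - c) t
    simpa using this
  calc Q s = Q (s ∩ Set.Iio t) + Q (s ∩ Set.Ici t) := hsplit Q
    _ ≤ (P (s ∩ Set.Iio t) + Q (Set.Ico (t - c) t)) + P (s ∩ Set.Ici t) := add_le_add h3 h1
    _ = (P (s ∩ Set.Iio t) + P (s ∩ Set.Ici t)) + Q (Set.Ico (t - c) t) := by ring
    _ = P s + Q (Set.Ico (t - c) t) := by rw [← hsplit P]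
    _ ≤ P s + ENNReal.ofReal (c * (Real.sqrt (2 * π * v))⁻¹) := add_le_add_right hIco _

lemma toReal_sub_le {P Q : ℝ≥0∞} {b : ℝ} (h : P ≤ Q + ENNReal.ofReal b) (hb : 0 ≤ b)
    (_hP : P ≠ ⊤) (hQ : Q ≠ ⊤) : P.toReal - Q.toReal ≤ b := by
  have := ENNReal.toReal_mono (by finiteness) h
  rw [ENNReal.toReal_add hQ ENNReal.ofReal_ne_top, ENNReal.toReal_ofReal hb] at this
  linarith

lemma gaussian_tv_abs (μ : ℝ) {v : ℝ≥0} (hv : v ≠ 0) (c : ℝ) {s : Set ℝ}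
    (hs : MeasurableSet s) :
    |((gaussianReal (μ + c) v) s).toReal - ((gaussianReal μ v) s).toReal| ≤
      |c| * (Real.sqrt (2 * π * v))⁻¹ := by
  have hb : 0 ≤ |c| * (Real.sqrt (2 * π * v))⁻¹ := by positivity
  rw [abs_sub_le_iff]
  rcases le_or_gt 0 c with hc | hc
  · rw [abs_of_nonneg hc]
    have hb' : 0 ≤ c * (Real.sqrt (2 * π * v))⁻¹ := mul_nonneg hc (by positivity)
    exact ⟨toReal_sub_le (gaussian_shift_le μ hv hc hs) hb' (measure_ne_top _ _)
        (measure_ne_top _ _),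
      toReal_sub_le (gaussian_shift_ge μ hv hc hs) hb' (measure_ne_top _ _) (measure_ne_top _ _)⟩
  · have hc' : 0 ≤ -c := by linarith
    rw [abs_of_neg hc]
    have h1 := gaussian_shift_le (μ + c) hv hc' hs
    have h2 := gaussian_shift_ge (μ + c) hv hc' hs
    rw [show μ + c + -c = μ by ring] at h1 h2
    have hb' : 0 ≤ -c * (Real.sqrt (2 * π * v))⁻¹ := mul_nonneg hc' (by positivity)
    exact ⟨toReal_sub_le h2 hb' (measure_ne_top _ _) (measure_ne_top _ _),
      toReal_sub_le h1 hb' (measure_ne_top _ _) (measure_ne_top _ _)⟩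

/-- The convolution `ξ n ∗ ξ (n+1) ∗ ⋯ ∗ ξ (n+m)` of a sequence of measures on `ℝ`. -/
noncomputable def convFrom (ξ : ℕ → Measure ℝ) (n : ℕ) : ℕ → Measure ℝ
  | 0 => ξ n
  | m + 1 => Measure.conv (convFrom ξ n m) (ξ (n + m + 1))

/-- If `(aₙ)` and `(σₙ)` are sequences of reals with `∑ σₙ² = +∞`, then for
each `c ∈ ℝ` and each `n`, the total variation distance
`‖N(aₙ,σₙ²)∗⋯∗N(a_{n+m},σ_{n+m}²)∗δ_c − N(aₙ,σₙ²)∗⋯∗N(a_{n+m},σ_{n+m}²)‖` tends to `0` as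
`m → ∞`; i.e. the sequence of Gaussian measures `(N(aₙ,σₙ²))` is asymptotically translation
invariant (ATI). -/
theorem gaussian_sequence_ATI (a σ : ℕ → ℝ) (hσ : ¬ Summable fun n => (σ n) ^ 2)
    (ξ : ℕ → Measure ℝ)
    (hξ : ∀ n, ξ n = gaussianReal (a n) ⟨(σ n) ^ 2, sq_nonneg (σ n)⟩) :
    ∀ (c : ℝ) (n : ℕ),
      Tendsto (fun m => ⨆ C : {s : Set ℝ // MeasurableSet s},
          |((Measure.conv (convFrom ξ n m) (Measure.dirac c)) C.1).toReal -
            ((convFrom ξ n m) C.1).toReal|)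
        atTop (nhds 0) := by
  intro c n
  have hconv : ∀ m, convFrom ξ n m = gaussianReal (∑ k ∈ Finset.range (m + 1), a (n + k))
      (∑ k ∈ Finset.range (m + 1), (⟨(σ (n + k)) ^ 2, sq_nonneg _⟩ : ℝ≥0)) := by
    intro m
    induction m with
    | zero => simp [convFrom, hξ n]; exact congrArg (gaussianReal (a n)) (Finset.sum_singleton (fun k => (⟨(σ (n + k)) ^ 2, sq_nonneg _⟩ : ℝ≥0)) 0).symm
    | succ m ih =>
      rw [show convFrom ξ n (m + 1) = Measure.conv (convFrom ξ n m) (ξ (n + m + 1)) from rfl,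
        ih, hξ (n + m + 1)]
      refine (_root_.gaussianReal_conv_gaussianReal _ _ _ _).trans ?_
      congr 1
      · simp [Finset.sum_range_succ, add_assoc]
      · exact (Finset.sum_range_succ (fun k => (⟨(σ (n + k)) ^ 2, sq_nonneg _⟩ : ℝ≥0)) (m + 1)).symm
  set A : ℕ → ℝ := fun m => ∑ k ∈ Finset.range (m + 1), a (n + k) with hA
  set V : ℕ → ℝ≥0 :=
    fun m => ∑ k ∈ Finset.range (m + 1), (⟨(σ (n + k)) ^ 2, sq_nonneg _⟩ : ℝ≥0) with hVdef
  have hconv2 : ∀ m, Measure.conv (convFrom ξ n m) (Measure.dirac c) =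
      gaussianReal (A m + c) (V m) := by
    intro m
    rw [hconv m, conv_dirac' _ c, gaussianReal_map_add_const]
  have hVcoe : ∀ m, ((V m : ℝ≥0) : ℝ) = ∑ k ∈ Finset.range (m + 1), (σ (n + k)) ^ 2 := by
    intro m
    rw [hVdef]
    push_cast
    exact NNReal.coe_sum ..
  have hns : ¬ Summable (fun k => (σ (n + k)) ^ 2) := by
    intro h
    exact hσ ((summable_nat_add_iff n).mp (by simpa [add_comm] using h))
  have hV : Tendsto (fun m => ((V m : ℝ≥0) : ℝ)) atTop atTop := by
    have h := (not_summable_iff_tendsto_nat_atTop_of_nonneg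
      (fun k => sq_nonneg (σ (n + k)))).mp hns
    have h2 := h.comp (tendsto_add_atTop_nat 1)
    refine h2.congr fun m => ?_
    rw [Function.comp_apply, hVcoe m]
  have hsqrt_atTop : Tendsto Real.sqrt atTop atTop := by
    refine tendsto_atTop_atTop.mpr fun b => ⟨(max b 0) ^ 2, fun x hx =>
      le_trans (le_max_left b 0) ?_⟩
    calc max b 0 = Real.sqrt ((max b 0) ^ 2) := (Real.sqrt_sq (le_max_right b 0)).symm
      _ ≤ Real.sqrt x := Real.sqrt_le_sqrt hx
  set B : ℕ → ℝ := fun m => |c| * (Real.sqrt (2 * π * ((V m : ℝ≥0) : ℝ)))⁻¹ with hB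
  have hBlim : Tendsto B atTop (nhds 0) := by
    have hsqrt : Tendsto (fun m => Real.sqrt (2 * π * ((V m : ℝ≥0) : ℝ))) atTop atTop :=
      hsqrt_atTop.comp (Tendsto.const_mul_atTop (by positivity) hV)
    have h0 : Tendsto B atTop (nhds (|c| * 0)) :=
      tendsto_const_nhds.mul hsqrt.inv_tendsto_atTop
    rwa [mul_zero] at h0
  apply squeeze_zero' (Filter.Eventually.of_forall fun m => Real.iSup_nonneg fun C => abs_nonneg _)
    ?_ hBlim
  have hVpos := hV.eventually_gt_atTop 0
  filter_upwards [hVpos] with m hm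
  have hVm : V m ≠ 0 := by
    intro h
    rw [h] at hm
    simp at hm
  refine Real.iSup_le (fun C => ?_) (by positivity)
  rw [hconv2 m, hconv m]
  exact gaussian_tv_abs (A m) hVm c C.2
end

section
/- Let H be a real Hilbert space and V an orthogonal operator on H. For f ∈ H define f⁽ⁿ⁾ by the affine iteration (f,V)ⁿ = (f⁽ⁿ⁾, Vⁿ), i.e. f⁽ⁿ⁾ = f + Vf + ⋯ + V^{n-1}f for n ≥ 1. Then f is a V-coboundary (f = a − Va for some a ∈ H) if and only if the sequence (f⁽ⁿ⁾)_{n∈ℤ} is bounded in H. -/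
open Filter

/-- Let `H` be a real Hilbert space and `V` an orthogonal operator on `H`.
For `f ∈ H` define `f⁽ⁿ⁾` (`n ∈ ℤ`) by the affine iteration `(f,V)ⁿ = (f⁽ⁿ⁾, Vⁿ)`, i.e.
`F 0 = 0` and `F (n+1) = f + V (F n)` for all `n ∈ ℤ`. Then `f` is a `V`-coboundary
(`f = a − Va` for some `a ∈ H`) if and only if the sequence `(f⁽ⁿ⁾)_{n∈ℤ}` is bounded. -/
theorem coboundary_iff_bounded_cocycle {H : Type*} [NormedAddCommGroup H]
    [InnerProductSpace ℝ H] [CompleteSpace H]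
    (V : H ≃ₗᵢ[ℝ] H) (f : H) (F : ℤ → H)
    (hF0 : F 0 = 0) (hFrec : ∀ n : ℤ, F (n + 1) = f + V (F n)) :
    (∃ a : H, f = a - V a) ↔ ∃ C : ℝ, ∀ n : ℤ, ‖F n‖ ≤ C := by
  have hVpow : ∀ (n : ℤ) (x : H), V ((V ^ n) x) = (V ^ (n + 1)) x := by
    intro n x; rw [add_comm, zpow_add, zpow_one]; rfl
  constructor
  · rintro ⟨a, ha⟩
    refine ⟨2 * ‖a‖, fun n => ?_⟩
    have key : ∀ n : ℤ, F n = a - (V ^ n) a := by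
      intro n
      induction n using Int.induction_on with
      | zero => simpa using hF0
      | succ k ih =>
          rw [hFrec, ih, ha, map_sub, hVpow]
          abel
      | pred k ih =>
          apply V.injective
          rw [map_sub, hVpow, sub_add_cancel]
          have h := hFrec (-(k : ℤ) - 1)
          rw [sub_add_cancel, ih, ha] at h
          have h2 : V (F (-(k : ℤ) - 1)) = (a - (V ^ (-(k : ℤ))) a) - (a - V a) := by
            rw [h]; abel
          rw [h2]; abel
    rw [key n]
    calc ‖a - (V ^ n) a‖ ≤ ‖a‖ + ‖(V ^ n) a‖ := norm_sub_le _ _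
      _ = 2 * ‖a‖ := by rw [(V ^ n).norm_map]; ring
  · rintro ⟨C, hC⟩
    set φ : H → ℝ := fun x => ⨆ n : ℤ, ‖x - F n‖ with hφdef
    have hbdd : ∀ x : H, BddAbove (Set.range fun n : ℤ => ‖x - F n‖) := by
      intro x
      refine ⟨‖x‖ + C, ?_⟩
      rintro r ⟨n, rfl⟩
      calc ‖x - F n‖ ≤ ‖x‖ + ‖F n‖ := norm_sub_le _ _
        _ ≤ ‖x‖ + C := by linarith [hC n]
    have hle : ∀ (x : H) (n : ℤ), ‖x - F n‖ ≤ φ x := fun x n => le_ciSup (hbdd x) n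
    have hsup : ∀ (x : H) (b : ℝ), (∀ n : ℤ, ‖x - F n‖ ≤ b) → φ x ≤ b :=
      fun x b h => ciSup_le h
    have hnn : ∀ x : H, 0 ≤ φ x := fun x => le_trans (norm_nonneg _) (hle x 0)
    -- invariance of φ under the affine isometry x ↦ f + V x
    have hT : ∀ x : H, φ (f + V x) = φ x := by
      intro x
      apply le_antisymm
      · apply hsup; intro n
        have h := hFrec (n - 1)
        rw [sub_add_cancel] at h
        have h2 : f + V x - F n = V (x - F (n - 1)) := by
          rw [h, map_sub]; abel
        rw [h2, V.norm_map]
        exact hle x (n - 1)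
      · apply hsup; intro n
        have h2 : V (x - F n) = f + V x - F (n + 1) := by
          rw [hFrec n, map_sub]; abel
        calc ‖x - F n‖ = ‖V (x - F n)‖ := (V.norm_map _).symm
          _ = ‖f + V x - F (n + 1)‖ := by rw [h2]
          _ ≤ φ (f + V x) := hle _ _
    -- midpoint (parallelogram) inequality for φ
    have hmid : ∀ x y : H,
        ‖x - y‖ ^ 2 ≤ 2 * (φ x) ^ 2 + 2 * (φ y) ^ 2 - 4 * (φ ((1/2 : ℝ) • (x + y))) ^ 2 := by
      intro x y
      set z := (1/2 : ℝ) • (x + y) with hz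
      set B := ((φ x) ^ 2 + (φ y) ^ 2) / 2 - ‖x - y‖ ^ 2 / 4 with hB
      have hBn : ∀ n : ℤ, ‖z - F n‖ ^ 2 ≤ B := by
        intro n
        have par := parallelogram_law_with_norm ℝ (x - F n) (y - F n)
        have h1 : z - F n = (1/2 : ℝ) • ((x - F n) + (y - F n)) := by
          rw [hz]; module
        have h2 : (x - F n) - (y - F n) = x - y := by abel
        have h3 : ‖z - F n‖ = (1/2) * ‖(x - F n) + (y - F n)‖ := by
          rw [h1, norm_smul]; simp
        rw [h2] at par
        have hx' := hle x n
        have hy' := hle y n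
        have hxnn := norm_nonneg (x - F n)
        have hynn := norm_nonneg (y - F n)
        rw [hB]
        nlinarith [norm_nonneg ((x - F n) + (y - F n))]
      have hBnn : 0 ≤ B := le_trans (sq_nonneg _) (hBn 0)
      have hzle : φ z ≤ Real.sqrt B := by
        apply hsup; intro n
        exact (Real.le_sqrt (norm_nonneg _) hBnn).2 (hBn n)
      have hz2 : (φ z) ^ 2 ≤ B := by
        have := pow_le_pow_left₀ (hnn z) hzle 2
        rwa [Real.sq_sqrt hBnn] at this
      rw [hB] at hz2
      linarith
    -- the infimum of φ
    have hbddb : BddBelow (Set.range φ) := ⟨0, by rintro r ⟨x, rfl⟩; exact hnn x⟩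
    set m := ⨅ x : H, φ x with hm
    have hmle : ∀ x : H, m ≤ φ x := fun x => ciInf_le hbddb x
    have hmnn : 0 ≤ m := le_ciInf hnn
    -- a key quadratic estimate
    have key : ∀ u v : H, ‖u - v‖ ^ 2 ≤ 2 * (φ u) ^ 2 + 2 * (φ v) ^ 2 - 4 * m ^ 2 := by
      intro u v
      have h1 := hmid u v
      have h2 := hmle ((1/2 : ℝ) • (u + v))
      nlinarith [hnn ((1/2 : ℝ) • (u + v))]
    -- minimizing sequence
    have hseq : ∀ k : ℕ, ∃ x : H, φ x < m + 1 / (k + 1) := by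
      intro k
      have hpos : (0 : ℝ) < 1 / (k + 1) := by positivity
      exact exists_lt_of_ciInf_lt (lt_add_of_pos_right m hpos)
    choose x hx using hseq
    -- the minimizing sequence is Cauchy
    have hone : ∀ j N : ℕ, N ≤ j → (1 : ℝ) / (j + 1) ≤ 1 / (N + 1) := by
      intro j N hNj
      apply one_div_le_one_div_of_le (by positivity)
      have : (N : ℝ) ≤ j := by exact_mod_cast hNj
      linarith
    have hcauchy : CauchySeq x := by
      refine cauchySeq_of_le_tendsto_0
        (fun N => Real.sqrt (8 * m * (1 / (N + 1)) + 4 * (1 / (N + 1)) ^ 2)) ?_ ?_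
      · intro j k N hj hk
        have hxj : φ (x j) ≤ m + 1 / (N + 1) :=
          le_trans (le_of_lt (hx j)) (by linarith [hone j N hj])
        have hxk : φ (x k) ≤ m + 1 / (N + 1) :=
          le_trans (le_of_lt (hx k)) (by linarith [hone k N hk])
        have hsq : ‖x j - x k‖ ^ 2 ≤ 8 * m * (1 / (N + 1)) + 4 * (1 / (N + 1)) ^ 2 := by
          have := key (x j) (x k)
          nlinarith [hnn (x j), hnn (x k)]
        rw [dist_eq_norm]
        exact (Real.le_sqrt (norm_nonneg _)
          (le_trans (sq_nonneg _) hsq)).2 hsq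
      · have h1 : Tendsto (fun N : ℕ => (1 : ℝ) / (N + 1)) atTop (nhds 0) :=
          tendsto_one_div_add_atTop_nhds_zero_nat
        have h2 : Tendsto (fun N : ℕ => 8 * m * (1 / (N + 1)) + 4 * (1 / (N + 1)) ^ 2)
            atTop (nhds (8 * m * 0 + 4 * 0 ^ 2)) :=
          ((tendsto_const_nhds.mul h1).add ((tendsto_const_nhds.mul (h1.pow 2))))
        simp only [mul_zero, zero_pow, add_zero] at h2
        have h3 := (Real.continuous_sqrt.tendsto 0).comp (by simpa using h2)
        simpa [Function.comp_def] using h3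
    obtain ⟨a, ha⟩ := cauchySeq_tendsto_of_complete hcauchy
    -- φ a ≤ m
    have hlip : ∀ (u : H) (k : ℕ), φ a ≤ φ (x k) + ‖a - x k‖ := by
      intro u k
      apply hsup; intro n
      calc ‖a - F n‖ ≤ ‖x k - F n‖ + ‖a - x k‖ := by
            have : a - F n = (x k - F n) + (a - x k) := by abel
            rw [this]; exact norm_add_le _ _
        _ ≤ φ (x k) + ‖a - x k‖ := by linarith [hle (x k) n]
    have hφa : φ a ≤ m := by
      have hc : Tendsto (fun k : ℕ => m + 1 / (k + 1) + ‖a - x k‖) atTop (nhds m) := by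
        have h1 : Tendsto (fun k : ℕ => (1 : ℝ) / (k + 1)) atTop (nhds 0) :=
          tendsto_one_div_add_atTop_nhds_zero_nat
        have h2 : Tendsto (fun k : ℕ => ‖a - x k‖) atTop (nhds 0) := by
          have h3 : Tendsto (fun k : ℕ => a - x k) atTop (nhds (a - a)) :=
            Tendsto.sub tendsto_const_nhds ha
          rw [sub_self] at h3
          simpa using h3.norm
        have h4 : Tendsto (fun k : ℕ => m + 1 / (k + 1) + ‖a - x k‖) atTop
            (nhds (m + 0 + 0)) := (tendsto_const_nhds.add h1).add h2
        simpa using h4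
      apply ge_of_tendsto hc
      filter_upwards with k
      calc φ a ≤ φ (x k) + ‖a - x k‖ := hlip a k
        _ ≤ m + 1 / (k + 1) + ‖a - x k‖ := by linarith [le_of_lt (hx k)]
    -- fixed point: a = f + V a
    have hφb : φ (f + V a) ≤ m := by rw [hT a]; exact hφa
    have hab : ‖a - (f + V a)‖ ^ 2 ≤ 0 := by
      have := key a (f + V a)
      nlinarith [hnn a, hnn (f + V a)]
    have hab0 : a = f + V a := by
      have h0 : ‖a - (f + V a)‖ = 0 := by nlinarith [norm_nonneg (a - (f + V a))]
      have := norm_sub_eq_zero_iff.1 h0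
      exact this
    exact ⟨a, (sub_eq_of_eq_add hab0).symm⟩
end

section
/- The family of exponential vectors {exp_h : h ∈ K} in the Fock space 𝓕(K) is linearly independent: any finite set of exponential vectors over distinct vectors h₁,…,hₙ ∈ K is linearly independent. -/
open scoped RealInnerProductSpace

-- step 1: exists k making inner products distinct
lemma exists_sep {K : Type*} [NormedAddCommGroup K] [InnerProductSpace ℝ K]
    (s : Finset K) : ∃ k : K, Set.InjOn (fun h => ⟪h, k⟫) s := by
  classical
  set t := (s ×ˢ s).filter (fun q => q.1 ≠ q.2) with ht
  let p : ↥t → Subspace ℝ K := fun q => LinearMap.ker (((innerSL ℝ) (q.1.1 - q.1.2) : K →L[ℝ] ℝ) : K →ₗ[ℝ] ℝ)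
  have hne : ⋃ i, (p i : Set K) ≠ Set.univ := by
    intro hcov
    obtain ⟨q, hq⟩ := Subspace.exists_eq_top_of_iUnion_eq_univ hcov
    have hmem : (q : K × K).1 ≠ (q : K × K).2 := (Finset.mem_filter.1 q.2).2
    have hd : (q : K × K).1 - (q : K × K).2 ≠ 0 := sub_ne_zero.2 hmem
    have : (q.1.1 - q.1.2) ∈ p q := by rw [hq]; trivial
    simp only [p, LinearMap.mem_ker, ContinuousLinearMap.coe_coe, innerSL_apply_apply] at this
    exact hd ((inner_self_eq_zero (𝕜 := ℝ)).1 this)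
  obtain ⟨k, hk⟩ := Set.ne_univ_iff_exists_notMem _ |>.1 hne
  refine ⟨k, fun a ha b hb hab => ?_⟩
  by_contra hne'
  apply hk
  refine Set.mem_iUnion.2 ⟨⟨(a, b), ?_⟩, ?_⟩
  · exact Finset.mem_filter.2 ⟨Finset.mem_product.2 ⟨ha, hb⟩, hne'⟩
  · simp only [p, SetLike.mem_coe, LinearMap.mem_ker, ContinuousLinearMap.coe_coe, innerSL_apply_apply, inner_sub_left]
    simpa [sub_eq_zero] using hab


/-- The family of exponential vectors `{exp_h : h ∈ K}` in the Fock space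
`𝓕(K)` (modelled as in Statement 14 by a family of chaoses `Fn n` with symmetric powers
`tpow` satisfying `⟨h^{⊗n}, k^{⊗n}⟩ = ⟨h,k⟩ⁿ`, and `exp_h = ⨁_n h^{⊗n}/√(n!)`) is linearly
independent: any finite set of exponential vectors over distinct vectors of `K` is linearly
independent. -/
theorem fock_exponential_linearIndependent {K : Type*} [NormedAddCommGroup K]
    [InnerProductSpace ℝ K]
    {Fn : ℕ → Type*} [∀ n, NormedAddCommGroup (Fn n)] [∀ n, InnerProductSpace ℝ (Fn n)]
    (tpow : ∀ n, K → Fn n)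
    (htpow : ∀ (n : ℕ) (h k : K), ⟪tpow n h, tpow n k⟫ = ⟪h, k⟫ ^ n)
    (expv : K → ∀ n, Fn n)
    (hexpv : ∀ (h : K) (n : ℕ), expv h n = ((Real.sqrt (Nat.factorial n))⁻¹ : ℝ) • tpow n h) :
    LinearIndependent ℝ expv := by

  classical
  rw [linearIndependent_iff']
  intro s g hsum i hi
  obtain ⟨k, hk⟩ := exists_sep s
  set v : K → ℝ := fun h => ⟪h, k⟫ with hv
  -- moment equations
  have key : ∀ n : ℕ, ∑ h ∈ s, g h * (v h) ^ n = 0 := by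
    intro n
    have h1 : ∑ h ∈ s, g h • expv h n = 0 := by
      have := congrFun hsum n
      simpa using this
    have h2 : ∑ h ∈ s, g h • tpow n h = 0 := by
      have hfac : (Real.sqrt (Nat.factorial n)) ≠ 0 := by
        positivity
      have := congrArg (fun x => (Real.sqrt (Nat.factorial n) : ℝ) • x) h1
      simpa [hexpv, Finset.smul_sum, smul_smul, mul_left_comm, hfac,
        mul_inv_cancel₀ hfac] using this
    have h3 := congrArg (fun x => ⟪x, tpow n k⟫) h2
    simpa [sum_inner, real_inner_smul_left, htpow] using h3
  -- Lagrange interpolation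
  set P := Lagrange.basis s v i with hP
  have hvinj : Set.InjOn v s := hk
  have heval : ∑ h ∈ s, g h * P.eval (v h) = g i := by
    rw [Finset.sum_eq_single i]
    · rw [Lagrange.eval_basis_self hvinj hi, mul_one]
    · intro b hb hbi
      rw [Lagrange.eval_basis_of_ne (Ne.symm hbi) hb, mul_zero]
    · intro h; exact absurd hi h
  have hzero : ∑ h ∈ s, g h * P.eval (v h) = 0 := by
    have : ∀ h ∈ s, g h * P.eval (v h)
        = ∑ n ∈ Finset.range (P.natDegree + 1), P.coeff n * (g h * (v h) ^ n) := by
      intro h _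
      rw [Polynomial.eval_eq_sum_range, Finset.mul_sum]
      exact Finset.sum_congr rfl fun n _ => by ring
    rw [Finset.sum_congr rfl this, Finset.sum_comm]
    refine Finset.sum_eq_zero fun n _ => ?_
    rw [← Finset.mul_sum, key n, mul_zero]
  rw [← heval, hzero]
end

section
/- Let 𝓗₀ be a real Hilbert space, V an orthogonal operator on 𝓗₀, f ∈ 𝓗₀, and f⁽ⁿ⁾ = f + Vf + ⋯ + V^{n-1}f. Define the Poincaré exponent δ_A = inf{α > 0 : ∑_{n≥1} e^{-α‖f⁽ⁿ⁾‖₀²} < ∞} ∈ [0,∞]. If for some t > 0 the series ∑_{n≥0} e^{t·ℓₙ(x) − t²‖f⁽ⁿ⁾‖₀²/2} diverges for a.e. x with respect to a Gaussian measure under which each ℓₙ is a centered Gaussian random variable of variance ‖f⁽ⁿ⁾‖₀², then ∑_{n≥0} e^{-t²‖f⁽ⁿ⁾‖₀²/8} = ∞, and hence δ_A ≥ t²/8. -/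
open MeasureTheory ProbabilityTheory
open scoped NNReal

lemma exp_mul_meas (s : ℝ) : Measurable fun x : ℝ => ENNReal.ofReal (Real.exp (s * x)) :=
  ((measurable_id.const_mul s).exp).ennreal_ofReal

lemma gauss_exp_lintegral (s : ℝ) (v : ℝ≥0) :
    ∫⁻ x, ENNReal.ofReal (Real.exp (s * x)) ∂(gaussianReal 0 v)
      = ENNReal.ofReal (Real.exp (s ^ 2 * v / 2)) := by
  rcases eq_or_ne v 0 with hv | hv
  · subst hv
    rw [gaussianReal_zero_var, lintegral_dirac' _ (exp_mul_meas s)]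
    simp
  · rw [gaussianReal_of_var_ne_zero _ hv,
      lintegral_withDensity_eq_lintegral_mul _ (measurable_gaussianPDF _ _) (exp_mul_meas s)]
    have key : ∀ x : ℝ, gaussianPDFReal 0 v x * Real.exp (s * x)
        = Real.exp (s ^ 2 * v / 2) * gaussianPDFReal (s * v) v x := by
      intro x
      simp only [gaussianPDFReal, sub_zero]
      rw [mul_assoc, ← Real.exp_add]
      have hv' : (v : ℝ) ≠ 0 := by exact_mod_cast hv
      have h1 : -x ^ 2 / (2 * (v : ℝ)) + s * x
          = s ^ 2 * v / 2 + -(x - s * v) ^ 2 / (2 * v) := by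
        field_simp
        ring
      rw [h1, Real.exp_add]
      ring
    calc ∫⁻ x, (gaussianPDF 0 v * fun x => ENNReal.ofReal (Real.exp (s * x))) x
        = ∫⁻ x, ENNReal.ofReal (Real.exp (s ^ 2 * v / 2) * gaussianPDFReal (s * v) v x) := by
          refine lintegral_congr fun x => ?_
          simp only [Pi.mul_apply, gaussianPDF, ← ENNReal.ofReal_mul
            (gaussianPDFReal_nonneg 0 v x), key x]
      _ = ENNReal.ofReal (Real.exp (s ^ 2 * v / 2)) := by
          rw [lintegral_congr fun x => ENNReal.ofReal_mul (le_of_lt (Real.exp_pos _)),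
            lintegral_const_mul _ (measurable_gaussianPDFReal _ _).ennreal_ofReal,
            lintegral_gaussianPDFReal_eq_one _ hv, mul_one]

/-- Let `𝓗₀` be a real Hilbert space, `V` an orthogonal operator on `𝓗₀`,
`f ∈ 𝓗₀`, and `f⁽ⁿ⁾ = f + Vf + ⋯ + V^{n-1}f` (i.e. `F 0 = 0`, `F (n+1) = f + V (F n)`).
Define the Poincaré exponent `δ_A = inf{α > 0 : ∑_{n≥1} e^{-α‖f⁽ⁿ⁾‖₀²} < ∞}`. If for some
`t > 0` the series `∑_{n≥0} e^{t·ℓₙ(x) − t²‖f⁽ⁿ⁾‖₀²/2}` diverges for a.e. `x` with respect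
to a Gaussian measure under which each `ℓₙ` is a centered Gaussian random variable of
variance `‖f⁽ⁿ⁾‖₀²`, then `∑_{n≥0} e^{-t²‖f⁽ⁿ⁾‖₀²/8} = ∞`, and hence `δ_A ≥ t²/8`
(every `α > 0` with `∑ₙ e^{-α‖f⁽ⁿ⁾‖₀²} < ∞` satisfies `α ≥ t²/8`). -/
theorem poincare_exponent_lower_bound {H0 : Type*} [NormedAddCommGroup H0]
    [InnerProductSpace ℝ H0]
    (V : H0 ≃ₗᵢ[ℝ] H0) (f : H0) (F : ℕ → H0)
    (hF0 : F 0 = 0) (hFrec : ∀ n : ℕ, F (n + 1) = f + V (F n))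
    {Ω : Type*} [MeasurableSpace Ω] (μ : Measure Ω) [IsProbabilityMeasure μ]
    (ℓ : ℕ → Ω → ℝ) (hℓm : ∀ n, Measurable (ℓ n))
    (hlaw : ∀ n, μ.map (ℓ n) = gaussianReal 0 ⟨‖F n‖ ^ 2, sq_nonneg ‖F n‖⟩)
    (t : ℝ) (ht : 0 < t)
    (hdiv : ∀ᵐ x ∂μ,
      ¬ Summable fun n => Real.exp (t * ℓ n x - t ^ 2 * ‖F n‖ ^ 2 / 2)) :
    (¬ Summable fun n => Real.exp (-t ^ 2 * ‖F n‖ ^ 2 / 8)) ∧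
      ∀ α : ℝ, 0 < α → (Summable fun n => Real.exp (-α * ‖F n‖ ^ 2)) →
        t ^ 2 / 8 ≤ α := by
  set X : ℕ → Ω → ℝ := fun n x => Real.exp (t / 2 * ℓ n x - t ^ 2 * ‖F n‖ ^ 2 / 4) with hX
  have hXm : ∀ n, Measurable fun x => ENNReal.ofReal (X n x) := fun n =>
    (((hℓm n).const_mul (t / 2)).sub measurable_const).exp.ennreal_ofReal
  -- expected value of X n
  have hEX : ∀ n, ∫⁻ x, ENNReal.ofReal (X n x) ∂μ
      = ENNReal.ofReal (Real.exp (-t ^ 2 * ‖F n‖ ^ 2 / 8)) := by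
    intro n
    have h1 : ∫⁻ x, ENNReal.ofReal (Real.exp (t / 2 * ℓ n x)) ∂μ
        = ENNReal.ofReal (Real.exp ((t / 2) ^ 2 * ‖F n‖ ^ 2 / 2)) := by
      rw [← lintegral_map (exp_mul_meas (t / 2)) (hℓm n), hlaw n]
      exact gauss_exp_lintegral (t / 2) _
    have h2 : ∀ x, ENNReal.ofReal (X n x)
        = ENNReal.ofReal (Real.exp (-(t ^ 2 * ‖F n‖ ^ 2 / 4)))
          * ENNReal.ofReal (Real.exp (t / 2 * ℓ n x)) := by
      intro x
      rw [← ENNReal.ofReal_mul (Real.exp_pos _).le, ← Real.exp_add, hX]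
      ring_nf
    rw [lintegral_congr h2, lintegral_const_mul _ (((hℓm n).const_mul (t / 2)).exp.ennreal_ofReal), h1,
      ← ENNReal.ofReal_mul (Real.exp_pos _).le, ← Real.exp_add,
      show -(t ^ 2 * ‖F n‖ ^ 2 / 4) + (t / 2) ^ 2 * ‖F n‖ ^ 2 / 2
        = -t ^ 2 * ‖F n‖ ^ 2 / 8 from by ring]
  have key : ¬ Summable fun n => Real.exp (-t ^ 2 * ‖F n‖ ^ 2 / 8) := by
    intro hs
    have htot : ∫⁻ x, ∑' n, ENNReal.ofReal (X n x) ∂μ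
        = ENNReal.ofReal (∑' n, Real.exp (-t ^ 2 * ‖F n‖ ^ 2 / 8)) := by
      rw [lintegral_tsum fun n => (hXm n).aemeasurable,
        ENNReal.ofReal_tsum_of_nonneg (fun n => (Real.exp_pos _).le) hs]
      exact tsum_congr hEX
    have hae : ∀ᵐ x ∂μ, (∑' n, ENNReal.ofReal (X n x)) < ⊤ := by
      refine ae_lt_top (by exact Measurable.ennreal_tsum fun n => hXm n) ?_
      rw [htot]; exact ENNReal.ofReal_ne_top
    have hcontra : ∀ᵐ x ∂μ, False := by
      filter_upwards [hae, hdiv] with x hx hdx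
      apply hdx
      have hXsum : Summable fun n => X n x := by
        have h := ENNReal.summable_toReal hx.ne
        exact h.congr fun n => ENNReal.toReal_ofReal (Real.exp_pos _).le
      have h0 : Filter.Tendsto (fun n => X n x) Filter.atTop (nhds 0) :=
        hXsum.tendsto_atTop_zero
      obtain ⟨N, hN⟩ := Filter.eventually_atTop.1 (h0.eventually (gt_mem_nhds one_pos))
      have hterm : ∀ n, Real.exp (t * ℓ n x - t ^ 2 * ‖F n‖ ^ 2 / 2) = X n x * X n x := by
        intro n
        rw [hX, ← Real.exp_add]
        ring_nf
      rw [← _root_.summable_nat_add_iff N]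
      refine Summable.of_nonneg_of_le (fun n => (Real.exp_pos _).le) (fun n => ?_)
        ((_root_.summable_nat_add_iff N).2 hXsum)
      rw [hterm]
      exact mul_le_of_le_one_left (Real.exp_pos _).le (hN (n + N) (le_add_self)).le
    have : (MeasureTheory.ae μ).NeBot := ae_neBot.2 (IsProbabilityMeasure.ne_zero μ)
    obtain ⟨_, h⟩ := hcontra.exists
    exact h
  refine ⟨key, fun α hα hsum => ?_⟩
  by_contra hlt
  push_neg at hlt
  refine key (Summable.of_nonneg_of_le (fun n => (Real.exp_pos _).le) (fun n => ?_) hsum)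
  apply Real.exp_le_exp.2
  nlinarith [sq_nonneg ‖F n‖, hlt.le]
end
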